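/- For every natural number n, \(\sum_{k=0}^{n} \binom{6n+5}{6k+2} B_{6k+2} = \frac{6n+5}{3}\). -/

import Mathlib

open Finset

section SCBAux

open Polynomial

noncomputable section

instance SCB.factIrr : Fact (Irreducible (Polynomial.cyclotomic 6 ℚ)) :=
  ⟨Polynomial.cyclotomic.irreducible_rat (by norm_num)⟩

/-- The field `ℚ(ω)` where `ω` is a primitive sixth root of unity. -/
abbrev SCB.KK : Type := AdjoinRoot (Polynomial.cyclotomic 6 ℚ)

namespace SCB

instance : CharZero KK := charZero_of_injective_algebraMap (algebraMap ℚ KK).injective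

def om : KK := AdjoinRoot.root _

lemma hprim : IsPrimitiveRoot om 6 := by
  have h1 : Polynomial.IsRoot (Polynomial.cyclotomic 6 KK) om := by
    rw [← Polynomial.map_cyclotomic 6 (algebraMap ℚ KK), Polynomial.IsRoot, Polynomial.eval_map,
      ← Polynomial.aeval_def, om, Polynomial.aeval_def]
    exact AdjoinRoot.eval₂_root _
  exact (Polynomial.isRoot_cyclotomic_iff).mp h1

lemma hom6 : om ^ 6 = 1 := hprim.pow_eq_one

lemma hom3 : om ^ 3 = -1 := by
  have h2 : (om ^ 3 - 1) * (om ^ 3 + 1) = 0 := by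
    have : om ^ 6 = 1 := hom6
    linear_combination this
  rcases mul_eq_zero.mp h2 with h | h
  · exfalso
    have : om ^ 3 = 1 := by linear_combination h
    rw [hprim.pow_eq_one_iff_dvd] at this
    omega
  · linear_combination h

lemma hom2 : om ^ 2 = om - 1 := by
  have h2 : (om + 1) * (om ^ 2 - om + 1) = 0 := by
    have := hom3; linear_combination this
  rcases mul_eq_zero.mp h2 with h | h
  · exfalso
    have : om ^ 2 = 1 := by
      have hom : om = -1 := by linear_combination h
      rw [hom]; ring
    rw [hprim.pow_eq_one_iff_dvd] at this
    omega
  · linear_combination h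

lemma hom4 : om ^ 4 = -om := by
  have : om ^ 4 = om ^ 3 * om := by ring
  rw [this, hom3]; ring

lemma hom5 : om ^ 5 = 1 - om := by
  have : om ^ 5 = om ^ 3 * om ^ 2 := by ring
  rw [this, hom3, hom2]; ring

lemma bern_comp (N : ℕ) :
    (Polynomial.bernoulli N).comp (X + 1) = Polynomial.bernoulli N + (N : ℚ) • X ^ (N - 1) := by
  apply Polynomial.funext
  intro x
  rw [Polynomial.eval_comp]
  simp only [eval_add, eval_X, eval_one, eval_smul, eval_pow, smul_eq_mul]
  rw [add_comm x 1]
  exact Polynomial.bernoulli_eval_one_add N x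

variable {A : Type} [Field A] [Algebra ℚ A]

lemma P_trans (N : ℕ) (x : A) :
    Polynomial.aeval (x + 1) (Polynomial.bernoulli N)
      = Polynomial.aeval x (Polynomial.bernoulli N) + (N : A) * x ^ (N - 1) := by
  have h := congrArg (Polynomial.aeval x) (bern_comp N)
  rw [Polynomial.aeval_comp] at h
  simpa [Algebra.smul_def, map_natCast] using h

lemma P_one (n : ℕ) : Polynomial.aeval (1 : A) (Polynomial.bernoulli (6*n+5)) = 0 := by
  have h := Polynomial.aeval_algebraMap_apply_eq_algebraMap_eval (A := A) (1 : ℚ)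
    (Polynomial.bernoulli (6*n+5))
  rw [map_one] at h
  rw [h, Polynomial.bernoulli_eval_one, bernoulli'_eq_zero_of_odd ⟨3*n+2, by ring⟩ (by omega), map_zero]

lemma P_zero (n : ℕ) : Polynomial.aeval (0 : A) (Polynomial.bernoulli (6*n+5)) = 0 := by
  have h := Polynomial.aeval_algebraMap_apply_eq_algebraMap_eval (A := A) (0 : ℚ)
    (Polynomial.bernoulli (6*n+5))
  rw [map_zero] at h
  rw [h, Polynomial.bernoulli_eval_zero, bernoulli_eq_bernoulli'_of_ne_one (by omega),
    bernoulli'_eq_zero_of_odd ⟨3*n+2, by ring⟩ (by omega), map_zero]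

lemma P_neg_one (n : ℕ) :
    Polynomial.aeval (-1 : A) (Polynomial.bernoulli (6*n+5)) = -((6*n+5 : ℕ) : A) := by
  have h := P_trans (A := A) (6*n+5) (-1)
  rw [neg_add_cancel, P_zero] at h
  have he : ((-1 : A)) ^ (6*n+5-1) = 1 := by
    have h2 : 6*n+5-1 = 2*(3*n+2) := by omega
    rw [h2, pow_mul]; norm_num
  rw [he, mul_one] at h
  linear_combination -h

lemma g_eq (N : ℕ) (x y : A) (hxy : x * y = 1) :
    ∑ i ∈ range (N + 1),
        algebraMap ℚ A (_root_.bernoulli i * (N.choose i)) * x ^ i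
      = x ^ N * Polynomial.aeval y (Polynomial.bernoulli N) := by
  rw [Polynomial.bernoulli, map_sum, Finset.mul_sum]
  refine Finset.sum_congr rfl fun i hi => ?_
  have hiN : i ≤ N := Nat.lt_succ_iff.mp (Finset.mem_range.mp hi)
  have hx : x ^ N = x ^ i * x ^ (N - i) := by rw [← pow_add, Nat.add_sub_cancel' hiN]
  have key : x ^ N * y ^ (N - i) = x ^ i := by
    rw [hx, mul_assoc, ← mul_pow, hxy, one_pow, mul_one]
  rw [Polynomial.aeval_monomial, ← key]
  ring

omit [Algebra ℚ A] in
lemma geom6 (z : A) (hz6 : z ^ 6 = 1) (hz1 : z ≠ 1) :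
    ∑ t ∈ range 6, z ^ t = 0 := by
  have h := geom_sum_mul z 6
  rw [hz6, sub_self] at h
  rcases mul_eq_zero.mp h with h' | h'
  · exact h'
  · exact absurd (by linear_combination h' : z = 1) hz1

end SCB

end

end SCBAux

theorem sum_choose_bernoulli_6k_add_2 (n : ℕ) :
    ∑ k ∈ Finset.range (n + 1),
        (Nat.choose (6 * n + 5) (6 * k + 2) : ℚ) * bernoulli (6 * k + 2) =
      (6 * n + 5) / 3 := by
  classical
  open SCB in
  set S : ℚ := ∑ k ∈ Finset.range (n + 1),
      (Nat.choose (6 * n + 5) (6 * k + 2) : ℚ) * bernoulli (6 * k + 2) with hS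
  set c : ℕ → KK := fun i => algebraMap ℚ KK (bernoulli i * ((6*n+5).choose i)) with hc
  set P : KK → KK := fun x => Polynomial.aeval x (Polynomial.bernoulli (6*n+5)) with hP
  set D : KK := ∑ t ∈ range 6, om ^ (4*t) * ∑ i ∈ range (6*n+5+1), c i * (om ^ t) ^ i with hD
  -- Route 1 : D = 2 * (6n+5)
  have route1 : ∀ t ∈ range 6, om ^ (4*t) * ∑ i ∈ range (6*n+5+1), c i * (om ^ t) ^ i
      = (-1 : KK) ^ t * P (om ^ (6 - t)) := by
    intro t ht
    have ht6 : t ≤ 6 := le_of_lt (Finset.mem_range.mp ht)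
    have hxy : om ^ t * om ^ (6 - t) = 1 := by
      rw [← pow_add, Nat.add_sub_cancel' ht6, hom6]
    rw [hc]
    rw [g_eq (6*n+5) (om ^ t) (om ^ (6-t)) hxy]
    have hcoef : om ^ (4*t) * (om ^ t) ^ (6*n+5) = (-1 : KK) ^ t := by
      rw [← pow_mul, ← pow_add, show 4*t + t*(6*n+5) = (6*(n+1)+3)*t by ring, pow_mul,
        pow_add, pow_mul, hom6, one_pow, one_mul, hom3]
    rw [← mul_assoc, hcoef, hP]
  have hD1 : D = 2 * ((6*n+5 : ℕ) : KK) := by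
    rw [hD, Finset.sum_congr rfl route1]
    simp only [Finset.sum_range_succ, Finset.sum_range_zero]
    norm_num
    rw [hom6, hom5, hom4, hom3, hom2]
    have e1 : P 1 = 0 := P_one n
    have e2 : P (-1) = -((6*n+5 : ℕ) : KK) := P_neg_one n
    have e3 : P (1 - om) = P (-om) + ((6*n+5:ℕ) : KK) * (-om) := by
      have h := P_trans (A := KK) (6*n+5) (-om)
      have hpow : (-om) ^ (6*n+5-1) = -om := by
        have h2 : 6*n+5-1 = 6*n+4 := by omega
        rw [h2, Even.neg_pow ⟨3*n+2, by omega⟩, pow_add, pow_mul, hom6, one_pow, one_mul, hom4]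
      rw [hpow] at h
      rw [show -om + 1 = 1 - om by ring] at h
      simp only [hP]
      push_cast at h ⊢
      linear_combination h
    have e4 : P om = P (om - 1) + ((6*n+5:ℕ) : KK) * (om - 1) := by
      have h := P_trans (A := KK) (6*n+5) (om - 1)
      have hpow : (om - 1) ^ (6*n+5-1) = om - 1 := by
        rw [← hom2, ← pow_mul, show 2*(6*n+5-1) = 6*(2*n+1)+2 by omega, pow_add, pow_mul,
          hom6, one_pow, one_mul, hom2]
      rw [hpow, sub_add_cancel] at h
      simp only [hP]
      push_cast at h ⊢
      linear_combination h
    push_cast at e2 e3 e4 ⊢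
    linear_combination -e3 - e4 + e1 - e2
  -- Route 2 : D = 6 * algebraMap S
  have key : ∀ t i : ℕ, om ^ (4*t) * (c i * (om ^ t) ^ i) = c i * (om ^ (4+i)) ^ t := by
    intro t i
    rw [← pow_mul, ← pow_mul, show (4+i)*t = 4*t + t*i by ring, pow_add]
    ring
  have hD2 : D = ∑ i ∈ range (6*n+5+1), c i * ∑ t ∈ range 6, (om ^ (4+i)) ^ t := by
    rw [hD]
    have : ∀ t ∈ range 6, om ^ (4*t) * ∑ i ∈ range (6*n+5+1), c i * (om ^ t) ^ i
        = ∑ i ∈ range (6*n+5+1), c i * (om ^ (4+i)) ^ t := by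
      intro t _
      rw [Finset.mul_sum]
      exact Finset.sum_congr rfl fun i _ => key t i
    rw [Finset.sum_congr rfl this, Finset.sum_comm]
    exact Finset.sum_congr rfl fun i _ => (Finset.mul_sum _ _ _).symm
  have hw : ∀ i : ℕ, (∑ t ∈ range 6, (om ^ (4+i)) ^ t) = if 6 ∣ 4+i then (6:KK) else 0 := by
    intro i
    by_cases h : 6 ∣ 4+i
    · rw [if_pos h, (hprim.pow_eq_one_iff_dvd _).mpr h]
      simp
    · rw [if_neg h]
      apply geom6
      · rw [← pow_mul, show (4+i)*6 = 6*(4+i) by ring, pow_mul, hom6, one_pow]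
      · intro hcon; exact h ((hprim.pow_eq_one_iff_dvd _).mp hcon)
  have himg : (range (6*n+5+1)).filter (fun i => 6 ∣ 4+i)
      = (range (n+1)).image (fun k => 6*k+2) := by
    ext i
    simp only [Finset.mem_filter, Finset.mem_range, Finset.mem_image]
    constructor
    · rintro ⟨h1, h2⟩
      exact ⟨(i-2)/6, by omega, by omega⟩
    · rintro ⟨k, hk, rfl⟩
      constructor <;> omega
  have hD3 : D = (∑ k ∈ range (n+1), c (6*k+2)) * 6 := by
    rw [hD2]
    have : ∀ i ∈ range (6*n+5+1), c i * ∑ t ∈ range 6, (om ^ (4+i)) ^ t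
        = if 6 ∣ 4+i then c i * 6 else 0 := by
      intro i _
      rw [hw i, mul_ite, mul_zero]
    rw [Finset.sum_congr rfl this, ← Finset.sum_filter, himg,
      Finset.sum_image (fun a _ b _ h => by omega), ← Finset.sum_mul]
  have hmap : algebraMap ℚ KK S = ∑ k ∈ range (n+1), c (6*k+2) := by
    rw [hS, map_sum]
    refine Finset.sum_congr rfl fun k _ => ?_
    simp only [hc]
    rw [mul_comm]
  have hfinal : algebraMap ℚ KK (S * 6) = algebraMap ℚ KK (2 * ((6*n+5 : ℕ) : ℚ)) := by
    rw [map_mul, map_mul, hmap, map_natCast, map_ofNat, map_ofNat, ← hD3, hD1]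
  have hq : S * 6 = 2 * ((6*n+5 : ℕ) : ℚ) := (algebraMap ℚ KK).injective hfinal
  push_cast at hq
  field_simp
  linarith
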